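/- Let V be a finite-dimensional real inner product space, let k ≥ 1, and for each index a ∈ {1,…,k} let n_a ∈ V be a nonzero vector, b_a > 0 a real number, and m_a^e > 0, m_a^o ≥ 0 real numbers. Define C := { w ∈ V : 0 < 1 − ⟨n_a, w⟩ < b_a for all a } and define X : C → V by X(w) := ∑_{a=1}^{k} (π/(2b_a))·[ (m_a^e + m_a^o)·cot(π(1 − ⟨n_a, w⟩)/b_a) + (m_a^e − m_a^o)·csc(π(1 − ⟨n_a, w⟩)/b_a) ]·n_a. Fix an index a₀, a point w₀ ∈ C, and a point w₀′ ∈ V with ⟨n_{a₀}, w₀′⟩ = 1 and 0 < 1 − ⟨n_a, w₀′⟩ < b_a for every a ≠ a₀, and set w_ε := ε·w₀ + (1 − ε)·w₀′ for ε ∈ (0,1). Then w_ε ∈ C for every ε ∈ (0,1), ‖X(w_ε)‖ → ∞ as ε → 0⁺, and X(w_ε)/‖X(w_ε)‖ → n_{a₀}/‖n_{a₀}‖ as ε → 0⁺. -/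

import Mathlib

open Real Filter Topology RealInnerProductSpace

/-- The mean curvature vector field `X` on the fundamental domain `C` blows up near the open
part of the wall `⟪n_{a₀}, ·⟫ = 1`, in the direction of the curvature normal `n_{a₀}`. -/
theorem stmt_5 {V : Type*} [NormedAddCommGroup V] [InnerProductSpace ℝ V]
    [FiniteDimensional ℝ V]
    (k : ℕ) (hk : 1 ≤ k)
    (n : Fin k → V) (hn : ∀ a, n a ≠ 0)
    (b : Fin k → ℝ) (hb : ∀ a, 0 < b a)
    (me mo : Fin k → ℝ) (hme : ∀ a, 0 < me a) (hmo : ∀ a, 0 ≤ mo a)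
    (C : Set V)
    (hC : C = {w : V | ∀ a, 0 < 1 - ⟪n a, w⟫ ∧ 1 - ⟪n a, w⟫ < b a})
    (X : V → V)
    (hX : ∀ w, X w = ∑ a, ((π / (2 * b a)) *
        ((me a + mo a) *
            (Real.cos (π * (1 - ⟪n a, w⟫) / b a) / Real.sin (π * (1 - ⟪n a, w⟫) / b a)) +
          (me a - mo a) * (1 / Real.sin (π * (1 - ⟪n a, w⟫) / b a)))) • n a)
    (a₀ : Fin k) (w₀ : V) (hw₀ : w₀ ∈ C)
    (w₀' : V) (hw₀'₁ : ⟪n a₀, w₀'⟫ = 1)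
    (hw₀'₂ : ∀ a, a ≠ a₀ → 0 < 1 - ⟪n a, w₀'⟫ ∧ 1 - ⟪n a, w₀'⟫ < b a) :
    (∀ ε ∈ Set.Ioo (0 : ℝ) 1, (ε • w₀ + (1 - ε) • w₀') ∈ C) ∧
    Tendsto (fun ε : ℝ => ‖X (ε • w₀ + (1 - ε) • w₀')‖) (𝓝[>] 0) atTop ∧
    Tendsto (fun ε : ℝ => ‖X (ε • w₀ + (1 - ε) • w₀')‖⁻¹ • X (ε • w₀ + (1 - ε) • w₀'))
      (𝓝[>] 0) (𝓝 (‖n a₀‖⁻¹ • n a₀)) := by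
  rw [hC] at hw₀
  -- basic data
  set w : ℝ → V := fun ε => ε • w₀ + (1 - ε) • w₀' with hw
  have ht' : ∀ (a : Fin k) (ε : ℝ), 1 - ⟪n a, w ε⟫
      = ε * (1 - ⟪n a, w₀⟫) + (1 - ε) * (1 - ⟪n a, w₀'⟫) := by
    intro a ε
    simp only [hw, inner_add_right, inner_smul_right]
    ring
  have hq : ∀ a, 0 ≤ 1 - ⟪n a, w₀'⟫ ∧ 1 - ⟪n a, w₀'⟫ < b a := by
    intro a
    by_cases h : a = a₀
    · subst h; simp [hw₀'₁, hb a]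
    · exact ⟨(hw₀'₂ a h).1.le, (hw₀'₂ a h).2⟩
  -- membership
  have hmem : ∀ ε ∈ Set.Ioo (0 : ℝ) 1, w ε ∈ C := by
    intro ε hε
    rw [hC]
    intro a
    rw [Set.mem_setOf_eq] at *
    rw [ht' a ε]
    obtain ⟨hp1, hp2⟩ := hw₀ a
    obtain ⟨hq1, hq2⟩ := hq a
    constructor
    · have := mul_pos hε.1 hp1
      nlinarith [mul_nonneg (by linarith [hε.2] : (0:ℝ) ≤ 1 - ε) hq1]
    · nlinarith [hε.1, hε.2]
  -- scalar functions
  set t : Fin k → ℝ → ℝ :=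
    fun a ε => ε * (1 - ⟪n a, w₀⟫) + (1 - ε) * (1 - ⟪n a, w₀'⟫) with htdef
  set f : Fin k → ℝ → ℝ := fun a ε =>
    π / (2 * b a) * ((me a + mo a) * Real.cos (π * t a ε / b a) + (me a - mo a)) *
      (Real.sin (π * t a ε / b a))⁻¹ with hfdef
  have hXw : ∀ ε : ℝ, X (w ε) = ∑ a, f a ε • n a := by
    intro ε
    rw [hX]
    refine Finset.sum_congr rfl fun a _ => ?_
    rw [ht' a ε]
    congr 1
    simp only [hfdef, htdef, div_eq_mul_inv]
    ring
  set R : ℝ → V := fun ε => ∑ a ∈ Finset.univ.erase a₀, f a ε • n a with hRdef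
  have hsplit : ∀ ε : ℝ, X (w ε) = f a₀ ε • n a₀ + R ε := by
    intro ε
    rw [hXw ε, hRdef, add_comm]
    exact (Finset.sum_erase_add _ _ (Finset.mem_univ a₀)).symm
  -- the blow-up of f a₀
  have hc : 0 < 1 - ⟪n a₀, w₀⟫ := (hw₀ a₀).1
  have hta₀ : ∀ ε : ℝ, t a₀ ε = ε * (1 - ⟪n a₀, w₀⟫) := by
    intro ε; simp [htdef, hw₀'₁]
  have hsin_tendsto : Tendsto Real.sin (𝓝[>] (0:ℝ)) (𝓝[>] 0) := by
    refine tendsto_nhdsWithin_of_tendsto_nhds_of_eventually_within _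
      ((Real.continuous_sin.tendsto' 0 0 (by simp)).mono_left nhdsWithin_le_nhds) ?_
    filter_upwards [Ioo_mem_nhdsGT Real.pi_pos] with x hx
    exact Real.sin_pos_of_pos_of_lt_pi hx.1 hx.2
  have hs_tendsto : Tendsto (fun ε => π * t a₀ ε / b a₀) (𝓝[>] (0:ℝ)) (𝓝[>] 0) := by
    refine tendsto_nhdsWithin_of_tendsto_nhds_of_eventually_within _ ?_ ?_
    · have hcont : Continuous fun ε : ℝ => π * t a₀ ε / b a₀ := by
        simp only [htdef]; fun_prop
      have : (fun ε : ℝ => π * t a₀ ε / b a₀) 0 = 0 := by simp [hta₀]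
      exact (hcont.tendsto' 0 0 this).mono_left nhdsWithin_le_nhds
    · filter_upwards [self_mem_nhdsWithin] with ε hε
      have : 0 < t a₀ ε := by rw [hta₀]; exact mul_pos hε hc
      exact div_pos (mul_pos Real.pi_pos this) (hb a₀)
  have hsin₀ : Tendsto (fun ε => Real.sin (π * t a₀ ε / b a₀)) (𝓝[>] (0:ℝ)) (𝓝[>] 0) :=
    hsin_tendsto.comp hs_tendsto
  have hA : Tendsto (fun ε => π / (2 * b a₀) *
      ((me a₀ + mo a₀) * Real.cos (π * t a₀ ε / b a₀) + (me a₀ - mo a₀)))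
      (𝓝[>] (0:ℝ)) (𝓝 (π / (2 * b a₀) * (2 * me a₀))) := by
    have hcos : Tendsto (fun ε => Real.cos (π * t a₀ ε / b a₀)) (𝓝[>] (0:ℝ)) (𝓝 1) := by
      have := (Real.continuous_cos.tendsto' 0 1 (by simp)).comp
        (hs_tendsto.mono_right nhdsWithin_le_nhds)
      exact this
    have hnum : Tendsto
        (fun ε => (me a₀ + mo a₀) * Real.cos (π * t a₀ ε / b a₀) + (me a₀ - mo a₀))
        (𝓝[>] (0:ℝ)) (𝓝 ((me a₀ + mo a₀) * 1 + (me a₀ - mo a₀))) :=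
      (tendsto_const_nhds.mul hcos).add tendsto_const_nhds
    convert hnum.const_mul (π / (2 * b a₀)) using 2
    ring
  have hApos : 0 < π / (2 * b a₀) * (2 * me a₀) :=
    mul_pos (div_pos Real.pi_pos (by linarith [hb a₀])) (by linarith [hme a₀])
  have hg : Tendsto (f a₀) (𝓝[>] (0:ℝ)) atTop :=
    hA.pos_mul_atTop hApos (tendsto_inv_nhdsGT_zero.comp hsin₀)
  -- continuity of the remainder
  have hfcont : ∀ a ∈ Finset.univ.erase a₀, ContinuousAt (f a) 0 := by
    intro a ha
    have hane : a ≠ a₀ := Finset.ne_of_mem_erase ha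
    have ht0 : t a 0 = 1 - ⟪n a, w₀'⟫ := by simp [htdef]
    have hq1 := (hw₀'₂ a hane).1
    have hq2 := (hw₀'₂ a hane).2
    have hucont : Continuous fun ε : ℝ => π * t a ε / b a := by
      simp only [htdef]; fun_prop
    have hsne : Real.sin (π * t a 0 / b a) ≠ 0 := by
      refine ne_of_gt (Real.sin_pos_of_pos_of_lt_pi ?_ ?_)
      · rw [ht0]; exact div_pos (mul_pos Real.pi_pos hq1) (hb a)
      · rw [ht0, div_lt_iff₀ (hb a)]
        nlinarith [Real.pi_pos]
    exact ((continuousAt_const.mul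
      ((continuousAt_const.mul (Real.continuous_cos.continuousAt.comp
        hucont.continuousAt)).add continuousAt_const)).mul
      ((Real.continuous_sin.continuousAt.comp hucont.continuousAt).inv₀ hsne))
  have hR : Tendsto R (𝓝[>] (0:ℝ)) (𝓝 (R 0)) := by
    have h : Tendsto (fun ε => ∑ a ∈ Finset.univ.erase a₀, f a ε • n a) (𝓝[>] (0:ℝ))
        (𝓝 (∑ a ∈ Finset.univ.erase a₀, f a 0 • n a)) :=
      tendsto_finset_sum _ fun a ha =>
        (((hfcont a ha).smul continuousAt_const).continuousWithinAt :
          ContinuousWithinAt (fun ε => f a ε • n a) (Set.Ioi 0) 0)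
    exact h
  -- the normalized direction
  set u : ℝ → V := fun ε => n a₀ + (f a₀ ε)⁻¹ • R ε with hudef
  have hu : Tendsto u (𝓝[>] (0:ℝ)) (𝓝 (n a₀)) := by
    have h1 : Tendsto (fun ε => (f a₀ ε)⁻¹) (𝓝[>] (0:ℝ)) (𝓝 0) :=
      tendsto_inv_atTop_zero.comp hg
    have h2 : Tendsto (fun ε => (f a₀ ε)⁻¹ • R ε) (𝓝[>] (0:ℝ)) (𝓝 ((0:ℝ) • R 0)) :=
      h1.smul hR
    rw [zero_smul] at h2
    simpa using tendsto_const_nhds.add h2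
  have hpos : ∀ᶠ ε in 𝓝[>] (0:ℝ), 0 < f a₀ ε := hg.eventually_gt_atTop 0
  have hXu : ∀ ε : ℝ, 0 < f a₀ ε → X (w ε) = f a₀ ε • u ε := by
    intro ε hε
    rw [hsplit ε, hudef]
    simp only [smul_add, smul_inv_smul₀ hε.ne']
  have hnormeq : ∀ᶠ ε in 𝓝[>] (0:ℝ), ‖X (w ε)‖ = f a₀ ε * ‖u ε‖ := by
    filter_upwards [hpos] with ε hε
    rw [hXu ε hε, norm_smul, Real.norm_eq_abs, abs_of_pos hε]
  have hnorm_tendsto : Tendsto (fun ε => f a₀ ε * ‖u ε‖) (𝓝[>] (0:ℝ)) atTop :=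
    hg.atTop_mul_pos (norm_pos_iff.2 (hn a₀)) hu.norm
  refine ⟨hmem, ?_, ?_⟩
  · exact hnorm_tendsto.congr' (by filter_upwards [hnormeq] with ε h using h.symm)
  · have hupos : ∀ᶠ ε in 𝓝[>] (0:ℝ), 0 < ‖u ε‖ :=
      hu.norm.eventually (eventually_gt_nhds (norm_pos_iff.2 (hn a₀)))
    have heq : ∀ᶠ ε in 𝓝[>] (0:ℝ),
        ‖u ε‖⁻¹ • u ε = ‖X (w ε)‖⁻¹ • X (w ε) := by
      filter_upwards [hpos, hnormeq] with ε hε hεn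
      rw [hεn, hXu ε hε, mul_inv, mul_smul, smul_comm, inv_smul_smul₀ hε.ne']
    have hlim : Tendsto (fun ε => ‖u ε‖⁻¹ • u ε) (𝓝[>] (0:ℝ)) (𝓝 (‖n a₀‖⁻¹ • n a₀)) :=
      (hu.norm.inv₀ (norm_ne_zero_iff.2 (hn a₀))).smul hu
    exact hlim.congr' heq
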